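/- Suppose the 4×4 symmetric tridiagonal matrix H with zero diagonal and couplings (J₁, J₂, J₁), J₁, J₂ > 0, exhibits perfect state transfer at time t₀ > 0, i.e., |⟨4| e^{-iHt₀} |1⟩| = 1. Then J₁² ≥ (3π²)/(4t₀²), i.e., J₁ ≥ (π√3)/(2t₀). -/

import Mathlib

open Matrix Real

noncomputable section

-- core matrix computation lemma
set_option maxHeartbeats 2000000 in
lemma core_exp (J1 J2 t₀ μ ν : ℝ) (hJ1 : 0 < J1) (hμ : 0 < μ) (hν : 0 < ν)
    (hprod : μ * ν = J1 ^ 2) (hdiff : μ - ν = J2) :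
    (NormedSpace.exp ((-(Complex.I * t₀)) •
      (!![0, (J1:ℂ), 0, 0; (J1:ℂ), 0, (J2:ℂ), 0;
         0, (J2:ℂ), 0, (J1:ℂ); 0, 0, (J1:ℂ), 0]))) 3 0
    = ((2 * (J1^2/(2*(J1^2+ν^2)) * Real.sin (ν*t₀)
          - J1^2/(2*(J1^2+μ^2)) * Real.sin (μ*t₀)) : ℝ) : ℂ) * Complex.I := by
  have hn1 : ((2*(J1^2+μ^2) : ℝ) : ℂ) ≠ 0 := by
    norm_cast; positivity
  have hn2 : ((2*(J1^2+ν^2) : ℝ) : ℂ) ≠ 0 := by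
    norm_cast; positivity
  have hprodC : (μ:ℂ) * ν = (J1:ℂ)^2 := by exact_mod_cast hprod
  have hc1 : (J1:ℂ)^2 + (μ:ℂ)^2 ≠ 0 := by
    have : ((J1^2 + μ^2 : ℝ) : ℂ) ≠ 0 := by norm_cast; positivity
    push_cast at this; exact this
  have hc2 : (J1:ℂ)^2 + (ν:ℂ)^2 ≠ 0 := by
    have : ((J1^2 + ν^2 : ℝ) : ℂ) ≠ 0 := by norm_cast; positivity
    push_cast at this; exact this
  have hdiffC : (μ:ℂ) - ν = (J2:ℂ) := by exact_mod_cast hdiff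
  set Hm : Matrix (Fin 4) (Fin 4) ℂ :=
    !![0, (J1:ℂ), 0, 0; (J1:ℂ), 0, (J2:ℂ), 0;
       0, (J2:ℂ), 0, (J1:ℂ); 0, 0, (J1:ℂ), 0] with hHm
  set P : Matrix (Fin 4) (Fin 4) ℂ :=
    !![(J1:ℂ), (J1:ℂ), (J1:ℂ), (J1:ℂ);
       (μ:ℂ), -(ν:ℂ), (ν:ℂ), -(μ:ℂ);
       (μ:ℂ), -(ν:ℂ), -(ν:ℂ), (μ:ℂ);
       (J1:ℂ), (J1:ℂ), -(J1:ℂ), -(J1:ℂ)] with hP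
  set N : Matrix (Fin 4) (Fin 4) ℂ :=
    diagonal ![((2*(J1^2+μ^2) : ℝ) : ℂ), ((2*(J1^2+ν^2) : ℝ) : ℂ),
               ((2*(J1^2+ν^2) : ℝ) : ℂ), ((2*(J1^2+μ^2) : ℝ) : ℂ)] with hN
  set Ninv : Matrix (Fin 4) (Fin 4) ℂ :=
    diagonal ![((2*(J1^2+μ^2) : ℝ) : ℂ)⁻¹, ((2*(J1^2+ν^2) : ℝ) : ℂ)⁻¹,
               ((2*(J1^2+ν^2) : ℝ) : ℂ)⁻¹, ((2*(J1^2+μ^2) : ℝ) : ℂ)⁻¹] with hNinv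
  set Q : Matrix (Fin 4) (Fin 4) ℂ := Ninv * Pᵀ with hQ
  have hPtP : Pᵀ * P = N := by
    ext i j
    fin_cases i <;> fin_cases j <;>
      simp +decide [hP, hN, Matrix.diagonal_apply, Matrix.mul_apply, Fin.sum_univ_four, Matrix.diagonal,
            Matrix.transpose_apply, Matrix.vecHead, Matrix.vecTail, Fin.ext_iff] <;>
      push_cast <;>
      (first | ring1 | linear_combination (2:ℂ) * hprodC | linear_combination (-2:ℂ) * hprodC)
  have hNNinv : N * Ninv = 1 := by
    ext i j
    fin_cases i <;> fin_cases j <;>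
      simp +decide [hN, hNinv, Matrix.mul_apply, Fin.sum_univ_four, Matrix.diagonal_apply,
        Matrix.one_apply] <;>
      field_simp <;> try ring1
  have hNinvN : Ninv * N = 1 := by
    ext i j
    fin_cases i <;> fin_cases j <;>
      simp +decide [hN, hNinv, Matrix.mul_apply, Fin.sum_univ_four, Matrix.diagonal_apply,
        Matrix.one_apply] <;>
      field_simp <;> try ring1
  have hQP : Q * P = 1 := by
    rw [hQ, Matrix.mul_assoc, hPtP, hNinvN]
  have hPQ : P * Q = 1 := mul_eq_one_comm.mp hQP
  set u : (Matrix (Fin 4) (Fin 4) ℂ)ˣ := ⟨P, Q, hPQ, hQP⟩ with hu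
  set D : Matrix (Fin 4) (Fin 4) ℂ := diagonal ![(μ:ℂ), -(ν:ℂ), (ν:ℂ), -(μ:ℂ)] with hD
  have hμeqC : (μ:ℂ)^2 = J2*μ + J1^2 := by linear_combination (μ:ℂ)*hdiffC + hprodC
  have hνeqC : (ν:ℂ)^2 = (J1:ℂ)^2 - J2*ν := by linear_combination -(ν:ℂ)*hdiffC + hprodC
  have hHP : Hm * P = P * D := by
    ext i j
    fin_cases i <;> fin_cases j <;>
      simp +decide [hHm, hP, hD, Matrix.diagonal_apply, Matrix.mul_apply, Fin.sum_univ_four,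
            Matrix.vecHead, Matrix.vecTail] <;>
      (first | ring1 | (linear_combination hμeqC) | (linear_combination hνeqC) | (linear_combination -hμeqC) | (linear_combination -hνeqC))
  have hHeq : Hm = P * D * Q := by
    calc Hm = Hm * (P * Q) := by rw [hPQ, Matrix.mul_one]
    _ = (Hm * P) * Q := by rw [Matrix.mul_assoc]
    _ = (P * D) * Q := by rw [hHP]
  have hsm : (-(Complex.I * (t₀:ℂ))) • Hm = P * ((-(Complex.I * (t₀:ℂ))) • D) * Q := by
    rw [hHeq, Matrix.mul_smul, Matrix.smul_mul]
  have hexpD : NormedSpace.exp ((-(Complex.I * (t₀:ℂ))) • D)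
      = diagonal (fun i => Complex.exp ((-(Complex.I * (t₀:ℂ))) *
          (![(μ:ℂ), -(ν:ℂ), (ν:ℂ), -(μ:ℂ)] i))) := by
    rw [hD, ← Matrix.diagonal_smul, Matrix.exp_diagonal, Pi.exp_def]
    congr 1
    funext i
    rw [← Complex.exp_eq_exp_ℂ]
    rfl
  have hmain : NormedSpace.exp ((-(Complex.I * (t₀:ℂ))) • Hm)
      = P * diagonal (fun i => Complex.exp ((-(Complex.I * (t₀:ℂ))) *
          (![(μ:ℂ), -(ν:ℂ), (ν:ℂ), -(μ:ℂ)] i))) * Q := by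
    rw [hsm, ← hexpD]
    have := Matrix.exp_units_conj u ((-(Complex.I * (t₀:ℂ))) • D)
    simpa [hu] using this
  have hexpval : ∀ x : ℝ, Complex.exp ((-(Complex.I * (t₀:ℂ))) * (x:ℂ))
      = ((Real.cos (x*t₀) : ℝ) : ℂ) - ((Real.sin (x*t₀) : ℝ) : ℂ) * Complex.I := by
    intro x
    rw [show (-(Complex.I * (t₀:ℂ))) * (x:ℂ) = ((-(x*t₀) : ℝ) : ℂ) * Complex.I by
      push_cast; ring]
    rw [Complex.exp_mul_I]
    push_cast
    rw [Complex.cos_neg, Complex.sin_neg]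
    ring
  rw [hmain]
  have hQ30 : ∀ k, Q k 0 = (![((2*(J1^2+μ^2) : ℝ) : ℂ)⁻¹, ((2*(J1^2+ν^2) : ℝ) : ℂ)⁻¹,
               ((2*(J1^2+ν^2) : ℝ) : ℂ)⁻¹, ((2*(J1^2+μ^2) : ℝ) : ℂ)⁻¹] k) * (J1:ℂ) := by
    intro k
    rw [hQ, hNinv, hP]
    fin_cases k <;> simp [Matrix.mul_apply, Fin.sum_univ_four, Matrix.diagonal_apply]
  have hent : (P * diagonal (fun i => Complex.exp ((-(Complex.I * (t₀:ℂ))) *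
          (![(μ:ℂ), -(ν:ℂ), (ν:ℂ), -(μ:ℂ)] i))) * Q) 3 0
      = ∑ k : Fin 4, P 3 k * Complex.exp ((-(Complex.I * (t₀:ℂ))) *
          (![(μ:ℂ), -(ν:ℂ), (ν:ℂ), -(μ:ℂ)] k)) * Q k 0 := by
    rw [Matrix.mul_apply]
    congr 1
    funext k
    rw [Matrix.mul_apply, Fin.sum_univ_four]
    fin_cases k <;> simp +decide [Matrix.diagonal_apply] <;> ring
  rw [hent, Fin.sum_univ_four]
  simp only [hQ30, hP]
  have em : Complex.exp ((-(Complex.I * (t₀:ℂ))) * (μ:ℂ))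
      = ((Real.cos (μ*t₀) : ℝ) : ℂ) - ((Real.sin (μ*t₀) : ℝ) : ℂ) * Complex.I := hexpval μ
  have en : Complex.exp ((-(Complex.I * (t₀:ℂ))) * (ν:ℂ))
      = ((Real.cos (ν*t₀) : ℝ) : ℂ) - ((Real.sin (ν*t₀) : ℝ) : ℂ) * Complex.I := hexpval ν
  have emn : Complex.exp ((-(Complex.I * (t₀:ℂ))) * (-(μ:ℂ)))
      = ((Real.cos (μ*t₀) : ℝ) : ℂ) + ((Real.sin (μ*t₀) : ℝ) : ℂ) * Complex.I := by
    rw [show (-(Complex.I * (t₀:ℂ))) * (-(μ:ℂ)) = (-(Complex.I * (t₀:ℂ))) * ((-μ:ℝ):ℂ) by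
      push_cast; ring, hexpval (-μ)]
    rw [show (-μ)*t₀ = -(μ*t₀) by ring, Real.cos_neg, Real.sin_neg]
    push_cast; ring
  have enn : Complex.exp ((-(Complex.I * (t₀:ℂ))) * (-(ν:ℂ)))
      = ((Real.cos (ν*t₀) : ℝ) : ℂ) + ((Real.sin (ν*t₀) : ℝ) : ℂ) * Complex.I := by
    rw [show (-(Complex.I * (t₀:ℂ))) * (-(ν:ℂ)) = (-(Complex.I * (t₀:ℂ))) * ((-ν:ℝ):ℂ) by
      push_cast; ring, hexpval (-ν)]
    rw [show (-ν)*t₀ = -(ν*t₀) by ring, Real.cos_neg, Real.sin_neg]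
    push_cast; ring
  simp only [Matrix.of_apply, Matrix.cons_val', Matrix.cons_val_zero, Matrix.cons_val_one, Matrix.head_cons,
    Matrix.head_fin_const, Matrix.cons_val_fin_one, Matrix.empty_val',
    Matrix.cons_val_two, Matrix.cons_val_three, Matrix.tail_cons]
  rw [em, en, emn, enn]
  have hd1 : (2:ℂ)*((J1:ℂ)^2+(μ:ℂ)^2) ≠ 0 := by
    intro h; apply hn1; push_cast; exact h
  have hd2 : (2:ℂ)*((J1:ℂ)^2+(ν:ℂ)^2) ≠ 0 := by
    intro h; apply hn2; push_cast; exact h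
  field_simp [hn1, hn2]
  push_cast
  try field_simp [hd1, hd2]
  ring

lemma sin_vals (a b s1 s2 : ℝ) (ha : 0 < a) (hb : 0 < b) (hab : a + b = 1/2)
    (hs1 : |s1| ≤ 1) (hs2 : |s2| ≤ 1) (h : |2 * (b * s2 - a * s1)| = 1) :
    (s1 = 1 ∧ s2 = -1) ∨ (s1 = -1 ∧ s2 = 1) := by
  have h2 : (2 * (b * s2 - a * s1))^2 = 1 := by
    rw [← sq_abs, h]; norm_num
  have hs1' : s1^2 ≤ 1 := by nlinarith [sq_abs s1, abs_nonneg s1]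
  have hs2' : s2^2 ≤ 1 := by nlinarith [sq_abs s2, abs_nonneg s2]
  have hcross : s1 * s2 + 1 ≥ 0 := by nlinarith [sq_nonneg (s1 + s2)]
  have hz : 4*a^2*(1-s1^2) + 4*b^2*(1-s2^2) + 8*a*b*(s1*s2+1) = 0 := by
    linear_combination (4*a+4*b+2)*hab - h2
  have t1 : a^2*(1 - s1^2) ≥ 0 := mul_nonneg (sq_nonneg a) (by linarith)
  have t2 : b^2*(1 - s2^2) ≥ 0 := mul_nonneg (sq_nonneg b) (by linarith)
  have t3 : a*b*(s1*s2+1) ≥ 0 := mul_nonneg (mul_pos ha hb).le (by linarith)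
  have he1 : s1^2 = 1 := le_antisymm hs1' (by nlinarith [pow_pos ha 2])
  have he2 : s2^2 = 1 := le_antisymm hs2' (by nlinarith [pow_pos hb 2])
  have hcr : s1 * s2 = -1 := by nlinarith [mul_pos ha hb]
  have h1 : s1 = 1 ∨ s1 = -1 := by
    rcases mul_eq_zero.mp (show (s1 - 1) * (s1 + 1) = 0 by nlinarith) with h' | h'
    · left; linarith
    · right; linarith
  rcases h1 with h' | h'
  · left; exact ⟨h', by nlinarith⟩
  · right; exact ⟨h', by nlinarith⟩

lemma final_ineq (J1 t₀ μ ν : ℝ) (m n : ℤ) (hJ1 : 0 < J1) (ht₀ : 0 < t₀)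
    (hμ : 0 < μ) (hν : 0 < ν) (hprod : μ * ν = J1 ^ 2)
    (hsum : (μ + ν) * t₀ = 2 * Real.pi * m) (hdiff : (μ - ν) * t₀ = (2 * n + 1) * Real.pi)
    (hμν : ν < μ) :
    J1 ≥ Real.pi * Real.sqrt 3 / (2 * t₀) := by
  have hπ := Real.pi_pos
  have hm1 : (1:ℤ) ≤ m := by
    have h0 : (0:ℝ) < 2 * Real.pi * m := by
      rw [← hsum]; positivity
    have h1 : (0:ℝ) < m := by nlinarith
    have : (0:ℤ) < m := by exact_mod_cast h1
    omega
  have hn0 : (0:ℤ) ≤ n := by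
    have h0 : (0:ℝ) < (2 * n + 1) * Real.pi := by
      rw [← hdiff]; nlinarith
    have h1 : (0:ℝ) < 2 * (n:ℝ) + 1 := by nlinarith
    have : (0:ℤ) < 2*n + 1 := by exact_mod_cast h1
    omega
  have hlt : 2 * n + 1 ≤ 2 * m - 1 := by
    have hR : (2 * (n:ℝ) + 1) * Real.pi < (2 * (m:ℝ)) * Real.pi := by
      calc (2 * (n:ℝ) + 1) * Real.pi = (μ - ν) * t₀ := hdiff.symm
      _ < (μ + ν) * t₀ := by nlinarith
      _ = 2 * (m:ℝ) * Real.pi := by rw [hsum]; ring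
    have h2 : (2 * (n:ℝ) + 1) < 2 * (m:ℝ) := by
      have := lt_of_mul_lt_mul_right hR hπ.le
      linarith
    have : (2 * n + 1 : ℤ) < 2 * m := by exact_mod_cast h2
    omega
  have hkey : 3 * Real.pi^2 ≤ 4 * (J1 * t₀)^2 := by
    have e : 4 * (J1 * t₀)^2 = (2 * Real.pi * m)^2 - ((2 * (n:ℝ) + 1) * Real.pi)^2 := by
      rw [← hsum, ← hdiff]
      linear_combination (-4*t₀^2) * hprod
    have hmR : (1:ℝ) ≤ (m:ℝ) := by exact_mod_cast hm1
    have hnR : (2 * (n:ℝ) + 1) ≤ 2 * (m:ℝ) - 1 := by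
      have : ((2*n+1:ℤ):ℝ) ≤ ((2*m-1:ℤ):ℝ) := by exact_mod_cast hlt
      push_cast at this; linarith
    have hnR0 : (0:ℝ) ≤ 2 * (n:ℝ) + 1 := by
      have : (0:ℝ) ≤ (n:ℝ) := by exact_mod_cast hn0
      linarith
    have hA : ((2*(n:ℝ)+1)*Real.pi)^2 ≤ ((2*(m:ℝ)-1)*Real.pi)^2 := by
      have h4 : (2*(n:ℝ)+1)^2 ≤ (2*(m:ℝ)-1)^2 := by nlinarith
      nlinarith [sq_nonneg Real.pi]
    have hB : 3*Real.pi^2 ≤ (2*Real.pi*(m:ℝ))^2 - ((2*(m:ℝ)-1)*Real.pi)^2 := by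
      nlinarith [mul_nonneg (sq_nonneg Real.pi) (by linarith : (0:ℝ) ≤ (m:ℝ)-1)]
    linarith [e, hA, hB]
  have hsq : (Real.pi * Real.sqrt 3)^2 ≤ (J1 * (2*t₀))^2 := by
    have h3 : (Real.sqrt 3)^2 = 3 := Real.sq_sqrt (by norm_num)
    nlinarith [hkey]
  have := Real.sqrt_le_sqrt hsq
  rw [Real.sqrt_sq (by positivity), Real.sqrt_sq (by positivity)] at this
  rw [ge_iff_le, div_le_iff₀ (by positivity)]
  linarith

/-- If the 4×4 symmetric tridiagonal matrix with zero diagonal and couplings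
`(J₁, J₂, J₁)`, `J₁, J₂ > 0`, exhibits perfect state transfer at time `t₀ > 0`
(the `(4,1)` entry of `e^{-iHt₀}` has modulus 1), then `J₁ ≥ π√3/(2t₀)`. -/
theorem stmt2 (J1 J2 t₀ : ℝ) (hJ1 : 0 < J1) (hJ2 : 0 < J2) (ht₀ : 0 < t₀)
    (H : Matrix (Fin 4) (Fin 4) ℂ)
    (hH : H = !![0, (J1:ℂ), 0, 0; (J1:ℂ), 0, (J2:ℂ), 0;
                 0, (J2:ℂ), 0, (J1:ℂ); 0, 0, (J1:ℂ), 0])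
    (hPST : ‖(NormedSpace.exp ((-(Complex.I * t₀)) • H)) 3 0‖ = 1) :
    J1 ≥ Real.pi * Real.sqrt 3 / (2 * t₀) := by
  subst hH
  have hΔsq : (Real.sqrt (J2^2 + 4*J1^2))^2 = J2^2 + 4*J1^2 :=
    Real.sq_sqrt (by positivity)
  have hΔpos : 0 < Real.sqrt (J2^2 + 4*J1^2) := Real.sqrt_pos.2 (by positivity)
  set Δ := Real.sqrt (J2^2 + 4*J1^2) with hΔdef
  have hJ2Δ : J2 < Δ := by nlinarith
  set μ := (J2 + Δ)/2 with hμdef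
  set ν := (Δ - J2)/2 with hνdef
  have hμpos : 0 < μ := by rw [hμdef]; linarith
  have hνpos : 0 < ν := by rw [hνdef]; linarith
  have hprod : μ * ν = J1^2 := by rw [hμdef, hνdef]; nlinarith
  have hdiff : μ - ν = J2 := by rw [hμdef, hνdef]; ring
  have hμν : ν < μ := by rw [hμdef, hνdef]; linarith
  rw [core_exp J1 J2 t₀ μ ν hJ1 hμpos hνpos hprod hdiff] at hPST
  rw [norm_mul, Complex.norm_I, mul_one, Complex.norm_real, Real.norm_eq_abs] at hPST
  have ha : 0 < J1^2/(2*(J1^2+μ^2)) := by positivity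
  have hb : 0 < J1^2/(2*(J1^2+ν^2)) := by positivity
  have hab : J1^2/(2*(J1^2+μ^2)) + J1^2/(2*(J1^2+ν^2)) = 1/2 := by
    have d1 : (2*(J1^2+μ^2)) ≠ 0 := by positivity
    have d2 : (2*(J1^2+ν^2)) ≠ 0 := by positivity
    field_simp
    linear_combination (2*(μ*ν + J1^2))*hprod - (3/16)*(Δ^2 - J2^2 + 4*J1^2)*hΔsq
  have hsb1 : |Real.sin (μ*t₀)| ≤ 1 := abs_le.mpr ⟨Real.neg_one_le_sin _, Real.sin_le_one _⟩
  have hsb2 : |Real.sin (ν*t₀)| ≤ 1 := abs_le.mpr ⟨Real.neg_one_le_sin _, Real.sin_le_one _⟩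
  have hsv := sin_vals (J1^2/(2*(J1^2+μ^2))) (J1^2/(2*(J1^2+ν^2)))
    (Real.sin (μ*t₀)) (Real.sin (ν*t₀)) ha hb hab hsb1 hsb2 hPST
  rcases hsv with ⟨h1, h2⟩ | ⟨h1, h2⟩
  · obtain ⟨k, hk⟩ := Real.sin_eq_one_iff.mp h1
    have h2' : Real.sin (-(ν*t₀)) = 1 := by rw [Real.sin_neg, h2]; norm_num
    obtain ⟨l, hl⟩ := Real.sin_eq_one_iff.mp h2'
    refine final_ineq J1 t₀ μ ν (k - l) (k + l) hJ1 ht₀ hμpos hνpos hprod ?_ ?_ hμν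
    · push_cast
      linarith [hk, hl]
    · push_cast
      linarith [hk, hl]
  · have h1' : Real.sin (-(μ*t₀)) = 1 := by rw [Real.sin_neg, h1]; norm_num
    obtain ⟨k, hk⟩ := Real.sin_eq_one_iff.mp h1'
    obtain ⟨l, hl⟩ := Real.sin_eq_one_iff.mp h2
    refine final_ineq J1 t₀ μ ν (l - k) (-(k + l) - 1) hJ1 ht₀ hμpos hνpos hprod ?_ ?_ hμν
    · push_cast
      linarith [hk, hl]
    · push_cast
      linarith [hk, hl]
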